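/- In the marriage problem with preference profile P2 = (M3,M1,M1,W2,W5,W1), with men truthful under the man-proposing DA algorithm, the set H2 = {W1} × {W5,W6} × {W1,...,W6} of women's report profiles is a partial preimage of μ^W_2 = [(m1,w1),(m2,w3),(m3,w2)]: every report profile in H2 yields μ^W_2. -/

import Mathlib

open scoped Classical

/-- A marriage problem's (strict) preference profile, given by injective rank
functions over potential partners plus the option `none` of staying single
(lower rank = more preferred). -/
structure Pref (M W : Type) where
  mrank : M → Option W → ℕ
  wrank : W → Option M → ℕ
  minj : ∀ a x y, mrank a x = mrank a y → x = y
  winj : ∀ b x y, wrank b x = wrank b y → x = y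

/-- A one-to-one matching between `M` and `W` (with `none` = single). -/
structure Matching (M W : Type) where
  mu : M → Option W
  nu : W → Option M
  consistent : ∀ a b, mu a = some b ↔ nu b = some a

/-- No player strictly prefers being single to the assigned partner. -/
def IndivRational {M W : Type} (P : Pref M W) (μ : Matching M W) : Prop :=
  (∀ a, ¬ P.mrank a none < P.mrank a (μ.mu a)) ∧
  (∀ b, ¬ P.wrank b none < P.wrank b (μ.nu b))

/-- The pair `(a, b)` blocks `μ`. -/
def Blocks {M W : Type} (P : Pref M W) (μ : Matching M W) (a : M) (b : W) : Prop :=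
  P.mrank a (some b) < P.mrank a (μ.mu a) ∧ P.wrank b (some a) < P.wrank b (μ.nu b)

/-- Stability: individual rationality together with absence of blocking pairs. -/
def StableMatching {M W : Type} (P : Pref M W) (μ : Matching M W) : Prop :=
  IndivRational P μ ∧ ∀ a b, ¬ Blocks P μ a b

noncomputable section

variable {M W : Type} [Fintype M] [Fintype W]

/-- `b` is acceptable to man `a`. -/
def mAcc (P : Pref M W) (a : M) (b : W) : Prop := P.mrank a (some b) < P.mrank a none

/-- `a` is acceptable to woman `b`. -/
def wAcc (P : Pref M W) (b : W) (a : M) : Prop := P.wrank b (some a) < P.wrank b none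

/-- The state of the man-proposing deferred acceptance algorithm:
for each man, the index of the next woman on his list to propose to,
and for each woman, the proposer she currently (tentatively) holds. -/
structure DAState (M W : Type) where
  next : M → ℕ
  hold : W → Option M

/-- A man is free if no woman currently holds him. -/
def IsFree (s : DAState M W) (a : M) : Prop := ∀ b, s.hold b ≠ some a

/-- The `k`-th woman (0-indexed) on man `a`'s list of acceptable women,
in decreasing order of preference. -/
def target (P : Pref M W) (a : M) (k : ℕ) : Option W :=
  if h : ∃ b : W, mAcc P a b ∧
      (Finset.univ.filter fun b' => mAcc P a b' ∧
        P.mrank a (some b') < P.mrank a (some b)).card = k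
  then some h.choose else none

/-- Woman `b`'s most preferred acceptable man in the finite set `c` (if any). -/
def best (P : Pref M W) (b : W) (c : Finset M) : Option M :=
  if h : ∃ a ∈ c, wAcc P b a ∧ ∀ a' ∈ c, wAcc P b a' → P.wrank b (some a) ≤ P.wrank b (some a')
  then some h.choose else none

/-- One round of the man-proposing deferred acceptance algorithm: every free
man proposes to the next woman on his list; every woman holds the best
acceptable man among her current proposers and the man she held before. -/
def daStep (P : Pref M W) (s : DAState M W) : DAState M W where
  next a := if IsFree s a ∧ (target P a (s.next a)).isSome then s.next a + 1 else s.next a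
  hold b := best P b
    ((Finset.univ.filter fun a => IsFree s a ∧ target P a (s.next a) = some b) ∪
      (s.hold b).toFinset)

/-- The algorithm terminates when no free man has anyone left to propose to. -/
def Finished (P : Pref M W) (s : DAState M W) : Prop :=
  ∀ a, IsFree s a → target P a (s.next a) = none

/-- Iterate the deferred acceptance rounds (with fuel). -/
def daRun (P : Pref M W) : ℕ → DAState M W → DAState M W
  | 0, s => s
  | n + 1, s => if Finished P s then s else daRun P n (daStep P s)

/-- The initial state: every man is free and about to propose to his favorite. -/
def daInit : DAState M W := ⟨fun _ => 0, fun _ => none⟩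

/-- The final state of the man-proposing deferred acceptance algorithm
(the fuel is enough for the algorithm to have terminated). -/
def daFinal (P : Pref M W) : DAState M W :=
  daRun P (Fintype.card M * (Fintype.card W + 1) + 1) daInit

/-- The partner of woman `b` under the man-proposing DA matching. -/
def daNu (P : Pref M W) (b : W) : Option M := (daFinal P).hold b

/-- The partner of man `a` under the man-proposing DA matching. -/
def daMu (P : Pref M W) (a : M) : Option W :=
  if h : ∃ b, (daFinal P).hold b = some a then some h.choose else none

/-- Man `a` proposes to woman `b` at some point during the run of the
man-proposing deferred acceptance algorithm. -/
def Proposes (P : Pref M W) (a : M) (b : W) : Prop :=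
  ∃ n, IsFree (daRun P n daInit) a ∧ target P a ((daRun P n daInit).next a) = some b

end

/-- The rank function of the strict preference list `(a, b, c)` over `Fin 3`
(with staying single ranked last). -/
def pl (a b _c : Fin 3) : Option (Fin 3) → ℕ
  | some x => if x = a then 0 else if x = b then 1 else 2
  | none => 3

/-- The six possible strict preference lists over three partners, labelled
`0,…,5` for `M1,…,M6` (equivalently `W1,…,W6`):
`(1,2,3), (1,3,2), (2,1,3), (2,3,1), (3,1,2), (3,2,1)`. -/
def lab : Fin 6 → Option (Fin 3) → ℕ :=
  ![pl 0 1 2, pl 0 2 1, pl 1 0 2, pl 1 2 0, pl 2 0 1, pl 2 1 0]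

lemma lab_inj : ∀ (k : Fin 6) (x y : Option (Fin 3)), lab k x = lab k y → x = y := by
  decide

/-- The `3 × 3` marriage problem in which man `a` has the preference list
labelled `pm a` and woman `b` the list labelled `pw b`. -/
def mkPref (pm pw : Fin 3 → Fin 6) : Pref (Fin 3) (Fin 3) where
  mrank a := lab (pm a)
  wrank b := lab (pw b)
  minj a := lab_inj (pm a)
  winj b := lab_inj (pw b)

/-- The matching pairing man `a` with woman `f a` (with inverse map `g`). -/
def mkMatch (f g : Fin 3 → Fin 3) (hc : ∀ a b, f a = b ↔ g b = a) :
    Matching (Fin 3) (Fin 3) :=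
  ⟨fun a => some (f a), fun b => some (g b), by simp [hc]⟩

/-- Men's true preferences in `P2`: `(M3, M1, M1)`. -/
def menP2 : Fin 3 → Fin 6 := ![2, 0, 0]

/-- `μ^W_2 = [(m1,w1), (m2,w3), (m3,w2)]`. -/
def muW2 : Matching (Fin 3) (Fin 3) := mkMatch ![0, 2, 1] ![0, 2, 1] (by decide)

/-! ### Auxiliary machinery -/

attribute [ext] DAState

lemma filter_eq_of_iff {α : Type} [Fintype α] {p : α → Prop} {i : DecidablePred p}
    {s : Finset α} (h : ∀ x, p x ↔ x ∈ s) :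
    @Finset.filter α p i Finset.univ = s := by
  ext x
  rw [Finset.mem_filter]
  simp [h x]

lemma target_some {M W : Type} [Fintype M] [Fintype W] (P : Pref M W) (a : M) (k : ℕ)
    (b0 : W) (s : Finset W)
    (h1 : mAcc P a b0)
    (h2 : ∀ x, (mAcc P a x ∧ P.mrank a (some x) < P.mrank a (some b0)) ↔ x ∈ s)
    (h3 : s.card = k) :
    target P a k = some b0 := by
  unfold target
  have hcard : (Finset.univ.filter fun b' =>
      mAcc P a b' ∧ P.mrank a (some b') < P.mrank a (some b0)).card = k := by
    rw [filter_eq_of_iff h2, h3]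
  have hex : ∃ b : W, mAcc P a b ∧ (Finset.univ.filter fun b' =>
      mAcc P a b' ∧ P.mrank a (some b') < P.mrank a (some b)).card = k := ⟨b0, h1, hcard⟩
  rw [dif_pos hex]
  obtain ⟨hacc, hk⟩ := hex.choose_spec
  rcases lt_trichotomy (P.mrank a (some hex.choose)) (P.mrank a (some b0)) with h | h | h
  · exfalso
    have hkk : k < k := by
      conv_lhs => rw [← hk]
      conv_rhs => rw [← hcard]
      refine Finset.card_lt_card ((Finset.ssubset_iff_of_subset (fun x hx => ?_)).2 ?_)
      · rcases Finset.mem_filter.1 hx with ⟨-, hax, hr⟩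
        exact Finset.mem_filter.2 ⟨Finset.mem_univ _, hax, hr.trans h⟩
      exact ⟨hex.choose, Finset.mem_filter.2 ⟨Finset.mem_univ _, hacc, h⟩,
        fun hb => absurd (Finset.mem_filter.1 hb).2.2 (lt_irrefl _)⟩
    exact absurd hkk (lt_irrefl _)
  · exact congrArg some (Option.some.inj (P.minj a _ _ h))
  · exfalso
    have hkk : k < k := by
      conv_lhs => rw [← hcard]
      conv_rhs => rw [← hk]
      refine Finset.card_lt_card ((Finset.ssubset_iff_of_subset (fun x hx => ?_)).2 ?_)
      · rcases Finset.mem_filter.1 hx with ⟨-, hax, hr⟩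
        exact Finset.mem_filter.2 ⟨Finset.mem_univ _, hax, hr.trans h⟩
      exact ⟨b0, Finset.mem_filter.2 ⟨Finset.mem_univ _, h1, h⟩,
        fun hb => absurd (Finset.mem_filter.1 hb).2.2 (lt_irrefl _)⟩
    exact absurd hkk (lt_irrefl _)

lemma best_some {M W : Type} [Fintype M] [Fintype W] (P : Pref M W) (b : W)
    (c : Finset M) (a0 : M)
    (h1 : a0 ∈ c) (h2 : wAcc P b a0)
    (h3 : ∀ a' ∈ c, wAcc P b a' → P.wrank b (some a0) ≤ P.wrank b (some a')) :
    best P b c = some a0 := by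
  unfold best
  have hex : ∃ a ∈ c, wAcc P b a ∧ ∀ a' ∈ c, wAcc P b a' →
      P.wrank b (some a) ≤ P.wrank b (some a') := ⟨a0, h1, h2, h3⟩
  rw [dif_pos hex]
  obtain ⟨hc, hacc, hmin⟩ := hex.choose_spec
  have : P.wrank b (some hex.choose) = P.wrank b (some a0) :=
    le_antisymm (hmin a0 h1 h2) (h3 _ hc hacc)
  exact congrArg some (Option.some.inj (P.winj b _ _ this))

lemma best_none {M W : Type} [Fintype M] [Fintype W] (P : Pref M W) (b : W)
    (c : Finset M) (h : ∀ a ∈ c, ¬ wAcc P b a) :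
    best P b c = none := by
  unfold best
  rw [dif_neg]
  rintro ⟨a, ha, hacc, -⟩
  exact h a ha hacc

instance instDecMAcc {M W : Type} [Fintype M] [Fintype W] (P : Pref M W) (a : M) (b : W) :
    Decidable (mAcc P a b) := Nat.decLt _ _

instance instDecWAcc {M W : Type} [Fintype M] [Fintype W] (P : Pref M W) (b : W) (a : M) :
    Decidable (wAcc P b a) := Nat.decLt _ _

lemma my_mem_union {α : Type} {i : DecidableEq α} {s t : Finset α} {a : α} :
    a ∈ @Union.union _ (@Finset.instUnion α i) s t ↔ a ∈ s ∨ a ∈ t := by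
  letI := i; exact Finset.mem_union

lemma my_mem_filter {α : Type} {p : α → Prop} {i : DecidablePred p} {s : Finset α} {a : α} :
    a ∈ @Finset.filter α p i s ↔ a ∈ s ∧ p a := @Finset.mem_filter α p i s a

lemma opt_isSome {o : Option (Fin 3)} {v : Fin 3} (h : o = some v) : o.isSome = true := by
  rw [h]; rfl

lemma dmu_eval (P : Pref (Fin 3) (Fin 3)) (s : DAState (Fin 3) (Fin 3))
    (hfin : daFinal P = s) (a b0 : Fin 3)
    (h : s.hold b0 = some a) (hu : ∀ b, s.hold b = some a → b = b0) :
    daMu P a = some b0 := by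
  unfold daMu
  have hex : ∃ b, (daFinal P).hold b = some a := ⟨b0, by rw [hfin]; exact h⟩
  rw [dif_pos hex]
  have hc := hex.choose_spec
  exact congrArg some (hu _ (by rw [← hfin]; exact hc))

/-- The intermediate states of the DA run on `P2` with reports `(W1, W5/W6, ·)`. -/
def st1 : DAState (Fin 3) (Fin 3) := ⟨![1, 1, 1], ![some 1, some 0, none]⟩
def st2 : DAState (Fin 3) (Fin 3) := ⟨![1, 1, 2], ![some 1, some 2, none]⟩
def st3 : DAState (Fin 3) (Fin 3) := ⟨![2, 1, 2], ![some 0, some 2, none]⟩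
def st4 : DAState (Fin 3) (Fin 3) := ⟨![2, 2, 2], ![some 0, some 2, none]⟩
def st5 : DAState (Fin 3) (Fin 3) := ⟨![2, 3, 2], ![some 0, some 2, some 1]⟩

lemma main_aux (P : Pref (Fin 3) (Fin 3))
    (t00 : target P 0 0 = some 1) (t01 : target P 0 1 = some 0)
    (t10 : target P 1 0 = some 0) (t11 : target P 1 1 = some 1) (t12 : target P 1 2 = some 2)
    (t20 : target P 2 0 = some 0) (t21 : target P 2 1 = some 1)
    (bA : best P 0 {1, 2} = some 1) (bB : best P 0 {0, 1} = some 0)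
    (bC : best P 0 {1} = some 1) (bD : best P 0 {0} = some 0)
    (bE : best P 1 {0} = some 0) (bF : best P 1 {0, 2} = some 2)
    (bG : best P 1 {1, 2} = some 2) (bH : best P 1 {2} = some 2)
    (bI : best P 2 ∅ = none) (bJ : best P 2 {1} = some 1) :
    daMu P = muW2.mu ∧ daNu P = muW2.nu := by
  have f0 : ∀ a, IsFree (daInit (M := Fin 3) (W := Fin 3)) a := fun a b hb => Option.some_ne_none a hb.symm
  have f12 : IsFree st1 2 := by intro b; fin_cases b <;> decide
  have nf10 : ¬ IsFree st1 0 := fun h => h 1 (by decide)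
  have nf11 : ¬ IsFree st1 1 := fun h => h 0 (by decide)
  have f20 : IsFree st2 0 := by intro b; fin_cases b <;> decide
  have nf21 : ¬ IsFree st2 1 := fun h => h 0 (by decide)
  have nf22 : ¬ IsFree st2 2 := fun h => h 1 (by decide)
  have f31 : IsFree st3 1 := by intro b; fin_cases b <;> decide
  have nf30 : ¬ IsFree st3 0 := fun h => h 0 (by decide)
  have nf32 : ¬ IsFree st3 2 := fun h => h 1 (by decide)
  have f41 : IsFree st4 1 := by intro b; fin_cases b <;> decide
  have nf40 : ¬ IsFree st4 0 := fun h => h 0 (by decide)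
  have nf42 : ¬ IsFree st4 2 := fun h => h 1 (by decide)
  have nf5 : ∀ a, ¬ IsFree st5 a := by
    intro a h
    fin_cases a
    · exact h 0 (by decide)
    · exact h 2 (by decide)
    · exact h 1 (by decide)
  have e1 : daStep P daInit = st1 := by
    refine DAState.ext (funext fun x => ?_) (funext fun y => ?_)
    · simp only [daStep]
      fin_cases x
      · exact if_pos ⟨f0 0, opt_isSome t00⟩
      · exact if_pos ⟨f0 1, opt_isSome t10⟩
      · exact if_pos ⟨f0 2, opt_isSome t20⟩
    · simp only [daStep]
      fin_cases y
      · -- woman 0: candidates [1, 2]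
        refine Eq.trans (congrArg _ ?_) (bA.trans (by decide))
        ext z
        constructor
        · intro hm
          rcases my_mem_union.1 hm with hm | hm
          · fin_cases z
            · exact absurd (t00.symm.trans (my_mem_filter.1 hm).2.2) (by decide)
            · decide
            · decide
          · fin_cases z
            · exact absurd hm (by decide)
            · exact absurd hm (by decide)
            · exact absurd hm (by decide)
        · intro hm
          fin_cases z
          · exact absurd hm (by decide)
          · exact my_mem_union.2 (Or.inl (my_mem_filter.2 ⟨Finset.mem_univ _, f0 1, t10⟩))
          · exact my_mem_union.2 (Or.inl (my_mem_filter.2 ⟨Finset.mem_univ _, f0 2, t20⟩))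
      · -- woman 1: candidates [0]
        refine Eq.trans (congrArg _ ?_) (bE.trans (by decide))
        ext z
        constructor
        · intro hm
          rcases my_mem_union.1 hm with hm | hm
          · fin_cases z
            · decide
            · exact absurd (t10.symm.trans (my_mem_filter.1 hm).2.2) (by decide)
            · exact absurd (t20.symm.trans (my_mem_filter.1 hm).2.2) (by decide)
          · fin_cases z
            · exact absurd hm (by decide)
            · exact absurd hm (by decide)
            · exact absurd hm (by decide)
        · intro hm
          fin_cases z
          · exact my_mem_union.2 (Or.inl (my_mem_filter.2 ⟨Finset.mem_univ _, f0 0, t00⟩))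
          · exact absurd hm (by decide)
          · exact absurd hm (by decide)
      · -- woman 2: candidates []
        refine Eq.trans (congrArg _ ?_) (bI.trans (by decide))
        ext z
        constructor
        · intro hm
          rcases my_mem_union.1 hm with hm | hm
          · fin_cases z
            · exact absurd (t00.symm.trans (my_mem_filter.1 hm).2.2) (by decide)
            · exact absurd (t10.symm.trans (my_mem_filter.1 hm).2.2) (by decide)
            · exact absurd (t20.symm.trans (my_mem_filter.1 hm).2.2) (by decide)
          · fin_cases z
            · exact absurd hm (by decide)
            · exact absurd hm (by decide)
            · exact absurd hm (by decide)
        · intro hm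
          fin_cases z
          · exact absurd hm (by decide)
          · exact absurd hm (by decide)
          · exact absurd hm (by decide)
  have e2 : daStep P st1 = st2 := by
    refine DAState.ext (funext fun x => ?_) (funext fun y => ?_)
    · simp only [daStep]
      fin_cases x
      · exact if_neg fun hc => nf10 hc.1
      · exact if_neg fun hc => nf11 hc.1
      · exact if_pos ⟨f12, opt_isSome t21⟩
    · simp only [daStep]
      fin_cases y
      · -- woman 0: candidates [1]
        refine Eq.trans (congrArg _ ?_) (bC.trans (by decide))
        ext z
        constructor
        · intro hm
          rcases my_mem_union.1 hm with hm | hm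
          · fin_cases z
            · exact absurd (my_mem_filter.1 hm).2.1 nf10
            · exact absurd (my_mem_filter.1 hm).2.1 nf11
            · exact absurd (t21.symm.trans (my_mem_filter.1 hm).2.2) (by decide)
          · fin_cases z
            · exact absurd hm (by decide)
            · decide
            · exact absurd hm (by decide)
        · intro hm
          fin_cases z
          · exact absurd hm (by decide)
          · exact my_mem_union.2 (Or.inr (by decide))
          · exact absurd hm (by decide)
      · -- woman 1: candidates [0, 2]
        refine Eq.trans (congrArg _ ?_) (bF.trans (by decide))
        ext z
        constructor
        · intro hm
          rcases my_mem_union.1 hm with hm | hm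
          · fin_cases z
            · exact absurd (my_mem_filter.1 hm).2.1 nf10
            · exact absurd (my_mem_filter.1 hm).2.1 nf11
            · decide
          · fin_cases z
            · decide
            · exact absurd hm (by decide)
            · exact absurd hm (by decide)
        · intro hm
          fin_cases z
          · exact my_mem_union.2 (Or.inr (by decide))
          · exact absurd hm (by decide)
          · exact my_mem_union.2 (Or.inl (my_mem_filter.2 ⟨Finset.mem_univ _, f12, t21⟩))
      · -- woman 2: candidates []
        refine Eq.trans (congrArg _ ?_) (bI.trans (by decide))
        ext z
        constructor
        · intro hm
          rcases my_mem_union.1 hm with hm | hm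
          · fin_cases z
            · exact absurd (my_mem_filter.1 hm).2.1 nf10
            · exact absurd (my_mem_filter.1 hm).2.1 nf11
            · exact absurd (t21.symm.trans (my_mem_filter.1 hm).2.2) (by decide)
          · fin_cases z
            · exact absurd hm (by decide)
            · exact absurd hm (by decide)
            · exact absurd hm (by decide)
        · intro hm
          fin_cases z
          · exact absurd hm (by decide)
          · exact absurd hm (by decide)
          · exact absurd hm (by decide)
  have e3 : daStep P st2 = st3 := by
    refine DAState.ext (funext fun x => ?_) (funext fun y => ?_)
    · simp only [daStep]
      fin_cases x
      · exact if_pos ⟨f20, opt_isSome t01⟩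
      · exact if_neg fun hc => nf21 hc.1
      · exact if_neg fun hc => nf22 hc.1
    · simp only [daStep]
      fin_cases y
      · -- woman 0: candidates [0, 1]
        refine Eq.trans (congrArg _ ?_) (bB.trans (by decide))
        ext z
        constructor
        · intro hm
          rcases my_mem_union.1 hm with hm | hm
          · fin_cases z
            · decide
            · exact absurd (my_mem_filter.1 hm).2.1 nf21
            · exact absurd (my_mem_filter.1 hm).2.1 nf22
          · fin_cases z
            · exact absurd hm (by decide)
            · decide
            · exact absurd hm (by decide)
        · intro hm
          fin_cases z
          · exact my_mem_union.2 (Or.inl (my_mem_filter.2 ⟨Finset.mem_univ _, f20, t01⟩))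
          · exact my_mem_union.2 (Or.inr (by decide))
          · exact absurd hm (by decide)
      · -- woman 1: candidates [2]
        refine Eq.trans (congrArg _ ?_) (bH.trans (by decide))
        ext z
        constructor
        · intro hm
          rcases my_mem_union.1 hm with hm | hm
          · fin_cases z
            · exact absurd (t01.symm.trans (my_mem_filter.1 hm).2.2) (by decide)
            · exact absurd (my_mem_filter.1 hm).2.1 nf21
            · exact absurd (my_mem_filter.1 hm).2.1 nf22
          · fin_cases z
            · exact absurd hm (by decide)
            · exact absurd hm (by decide)
            · decide
        · intro hm
          fin_cases z
          · exact absurd hm (by decide)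
          · exact absurd hm (by decide)
          · exact my_mem_union.2 (Or.inr (by decide))
      · -- woman 2: candidates []
        refine Eq.trans (congrArg _ ?_) (bI.trans (by decide))
        ext z
        constructor
        · intro hm
          rcases my_mem_union.1 hm with hm | hm
          · fin_cases z
            · exact absurd (t01.symm.trans (my_mem_filter.1 hm).2.2) (by decide)
            · exact absurd (my_mem_filter.1 hm).2.1 nf21
            · exact absurd (my_mem_filter.1 hm).2.1 nf22
          · fin_cases z
            · exact absurd hm (by decide)
            · exact absurd hm (by decide)
            · exact absurd hm (by decide)
        · intro hm
          fin_cases z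
          · exact absurd hm (by decide)
          · exact absurd hm (by decide)
          · exact absurd hm (by decide)
  have e4 : daStep P st3 = st4 := by
    refine DAState.ext (funext fun x => ?_) (funext fun y => ?_)
    · simp only [daStep]
      fin_cases x
      · exact if_neg fun hc => nf30 hc.1
      · exact if_pos ⟨f31, opt_isSome t11⟩
      · exact if_neg fun hc => nf32 hc.1
    · simp only [daStep]
      fin_cases y
      · -- woman 0: candidates [0]
        refine Eq.trans (congrArg _ ?_) (bD.trans (by decide))
        ext z
        constructor
        · intro hm
          rcases my_mem_union.1 hm with hm | hm
          · fin_cases z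
            · exact absurd (my_mem_filter.1 hm).2.1 nf30
            · exact absurd (t11.symm.trans (my_mem_filter.1 hm).2.2) (by decide)
            · exact absurd (my_mem_filter.1 hm).2.1 nf32
          · fin_cases z
            · decide
            · exact absurd hm (by decide)
            · exact absurd hm (by decide)
        · intro hm
          fin_cases z
          · exact my_mem_union.2 (Or.inr (by decide))
          · exact absurd hm (by decide)
          · exact absurd hm (by decide)
      · -- woman 1: candidates [1, 2]
        refine Eq.trans (congrArg _ ?_) (bG.trans (by decide))
        ext z
        constructor
        · intro hm
          rcases my_mem_union.1 hm with hm | hm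
          · fin_cases z
            · exact absurd (my_mem_filter.1 hm).2.1 nf30
            · decide
            · exact absurd (my_mem_filter.1 hm).2.1 nf32
          · fin_cases z
            · exact absurd hm (by decide)
            · exact absurd hm (by decide)
            · decide
        · intro hm
          fin_cases z
          · exact absurd hm (by decide)
          · exact my_mem_union.2 (Or.inl (my_mem_filter.2 ⟨Finset.mem_univ _, f31, t11⟩))
          · exact my_mem_union.2 (Or.inr (by decide))
      · -- woman 2: candidates []
        refine Eq.trans (congrArg _ ?_) (bI.trans (by decide))
        ext z
        constructor
        · intro hm
          rcases my_mem_union.1 hm with hm | hm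
          · fin_cases z
            · exact absurd (my_mem_filter.1 hm).2.1 nf30
            · exact absurd (t11.symm.trans (my_mem_filter.1 hm).2.2) (by decide)
            · exact absurd (my_mem_filter.1 hm).2.1 nf32
          · fin_cases z
            · exact absurd hm (by decide)
            · exact absurd hm (by decide)
            · exact absurd hm (by decide)
        · intro hm
          fin_cases z
          · exact absurd hm (by decide)
          · exact absurd hm (by decide)
          · exact absurd hm (by decide)
  have e5 : daStep P st4 = st5 := by
    refine DAState.ext (funext fun x => ?_) (funext fun y => ?_)
    · simp only [daStep]
      fin_cases x
      · exact if_neg fun hc => nf40 hc.1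
      · exact if_pos ⟨f41, opt_isSome t12⟩
      · exact if_neg fun hc => nf42 hc.1
    · simp only [daStep]
      fin_cases y
      · -- woman 0: candidates [0]
        refine Eq.trans (congrArg _ ?_) (bD.trans (by decide))
        ext z
        constructor
        · intro hm
          rcases my_mem_union.1 hm with hm | hm
          · fin_cases z
            · exact absurd (my_mem_filter.1 hm).2.1 nf40
            · exact absurd (t12.symm.trans (my_mem_filter.1 hm).2.2) (by decide)
            · exact absurd (my_mem_filter.1 hm).2.1 nf42
          · fin_cases z
            · decide
            · exact absurd hm (by decide)
            · exact absurd hm (by decide)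
        · intro hm
          fin_cases z
          · exact my_mem_union.2 (Or.inr (by decide))
          · exact absurd hm (by decide)
          · exact absurd hm (by decide)
      · -- woman 1: candidates [2]
        refine Eq.trans (congrArg _ ?_) (bH.trans (by decide))
        ext z
        constructor
        · intro hm
          rcases my_mem_union.1 hm with hm | hm
          · fin_cases z
            · exact absurd (my_mem_filter.1 hm).2.1 nf40
            · exact absurd (t12.symm.trans (my_mem_filter.1 hm).2.2) (by decide)
            · exact absurd (my_mem_filter.1 hm).2.1 nf42
          · fin_cases z
            · exact absurd hm (by decide)
            · exact absurd hm (by decide)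
            · decide
        · intro hm
          fin_cases z
          · exact absurd hm (by decide)
          · exact absurd hm (by decide)
          · exact my_mem_union.2 (Or.inr (by decide))
      · -- woman 2: candidates [1]
        refine Eq.trans (congrArg _ ?_) (bJ.trans (by decide))
        ext z
        constructor
        · intro hm
          rcases my_mem_union.1 hm with hm | hm
          · fin_cases z
            · exact absurd (my_mem_filter.1 hm).2.1 nf40
            · decide
            · exact absurd (my_mem_filter.1 hm).2.1 nf42
          · fin_cases z
            · exact absurd hm (by decide)
            · exact absurd hm (by decide)
            · exact absurd hm (by decide)
        · intro hm
          fin_cases z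
          · exact absurd hm (by decide)
          · exact my_mem_union.2 (Or.inl (my_mem_filter.2 ⟨Finset.mem_univ _, f41, t12⟩))
          · exact absurd hm (by decide)
  have step : ∀ (n : ℕ) (s s' : DAState (Fin 3) (Fin 3)), ¬ Finished P s →
      daStep P s = s' → daRun P (n + 1) s = daRun P n s' := by
    intro n s s' h hs
    rw [daRun, if_neg h, hs]
  have h0 : ¬ Finished P daInit := fun h => Option.some_ne_none _ (t00.symm.trans (h 0 (f0 0)))
  have h1 : ¬ Finished P st1 := fun h => Option.some_ne_none _ (t21.symm.trans (h 2 f12))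
  have h2 : ¬ Finished P st2 := fun h => Option.some_ne_none _ (t01.symm.trans (h 0 f20))
  have h3 : ¬ Finished P st3 := fun h => Option.some_ne_none _ (t11.symm.trans (h 1 f31))
  have h4 : ¬ Finished P st4 := fun h => Option.some_ne_none _ (t12.symm.trans (h 1 f41))
  have h5 : Finished P st5 := fun a hf => absurd hf (nf5 a)
  have hlast : daRun P 8 st5 = st5 := by
    show daRun P (7 + 1) st5 = st5
    rw [daRun, if_pos h5]
  have hrun : daRun P 13 daInit = st5 :=
    (step 12 _ _ h0 e1).trans ((step 11 _ _ h1 e2).trans ((step 10 _ _ h2 e3).trans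
      ((step 9 _ _ h3 e4).trans ((step 8 _ _ h4 e5).trans hlast))))
  have hfinal : daFinal P = st5 := hrun
  constructor
  · funext a
    fin_cases a
    · exact dmu_eval P st5 hfinal 0 0 (by decide) (by decide)
    · exact dmu_eval P st5 hfinal 1 2 (by decide) (by decide)
    · exact dmu_eval P st5 hfinal 2 1 (by decide) (by decide)
  · funext b
    fin_cases b <;> exact congrArg (fun s => DAState.hold s _) hfinal
/-- In the problem `P2` with men truthful under the
man-proposing DA algorithm, `H2 = {W1} × {W5,W6} × {W1,…,W6}` is a partial
preimage of `μ^W_2`: every such report profile of the women yields `μ^W_2`. -/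
theorem P2_H2_partial_preimage :
    ∀ k2 : Fin 6, (k2 = 4 ∨ k2 = 5) → ∀ k3 : Fin 6,
      daMu (mkPref menP2 ![0, k2, k3]) = muW2.mu ∧
      daNu (mkPref menP2 ![0, k2, k3]) = muW2.nu := by
  intro k2 hk2 k3
  rcases hk2 with rfl | rfl <;> fin_cases k3 <;>
    exact main_aux _
      (target_some _ 0 0 1 ∅ (by decide) (by decide) (by decide))
      (target_some _ 0 1 0 {1} (by decide) (by decide) (by decide))
      (target_some _ 1 0 0 ∅ (by decide) (by decide) (by decide))
      (target_some _ 1 1 1 {0} (by decide) (by decide) (by decide))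
      (target_some _ 1 2 2 {0, 1} (by decide) (by decide) (by decide))
      (target_some _ 2 0 0 ∅ (by decide) (by decide) (by decide))
      (target_some _ 2 1 1 {0} (by decide) (by decide) (by decide))
      (best_some _ 0 {1, 2} 1 (by decide) (by decide) (by decide))
      (best_some _ 0 {0, 1} 0 (by decide) (by decide) (by decide))
      (best_some _ 0 {1} 1 (by decide) (by decide) (by decide))
      (best_some _ 0 {0} 0 (by decide) (by decide) (by decide))
      (best_some _ 1 {0} 0 (by decide) (by decide) (by decide))
      (best_some _ 1 {0, 2} 2 (by decide) (by decide) (by decide))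
      (best_some _ 1 {1, 2} 2 (by decide) (by decide) (by decide))
      (best_some _ 1 {2} 2 (by decide) (by decide) (by decide))
      (best_none _ 2 ∅ (by decide))
      (best_some _ 2 {1} 1 (by decide) (by decide) (by decide))
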